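/- The Choi–Lam sextic s(x,y,z) = x^4y^2 + y^4z^2 + z^4x^2 - 3x^2y^2z^2 is not a sum of squares of real cubic forms. -/

import Mathlib

open MvPolynomial Finsupp

noncomputable def m3 (a b c : ℕ) : Fin 3 →₀ ℕ :=
  Finsupp.single 0 a + Finsupp.single 1 b + Finsupp.single 2 c

@[simp] lemma m3_apply0 (a b c : ℕ) : m3 a b c 0 = a := by simp [m3, Finsupp.single_apply]
@[simp] lemma m3_apply1 (a b c : ℕ) : m3 a b c 1 = b := by simp [m3, Finsupp.single_apply]
@[simp] lemma m3_apply2 (a b c : ℕ) : m3 a b c 2 = c := by simp [m3, Finsupp.single_apply]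

lemma eq_m3 (d : Fin 3 →₀ ℕ) : d = m3 (d 0) (d 1) (d 2) := by
  ext i; fin_cases i <;> simp

lemma m3_eq_iff {a b c a' b' c' : ℕ} : m3 a b c = m3 a' b' c' ↔ a = a' ∧ b = b' ∧ c = c' := by
  constructor
  · intro h
    exact ⟨by simpa using congrArg (fun f => f 0) h,
           by simpa using congrArg (fun f => f 1) h,
           by simpa using congrArg (fun f => f 2) h⟩
  · rintro ⟨rfl, rfl, rfl⟩; rfl

lemma to_m3 {d : Fin 3 →₀ ℕ} {a b c : ℕ} (h0 : d 0 = a) (h1 : d 1 = b) (h2 : d 2 = c) :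
    d = m3 a b c := (eq_m3 d).trans (m3_eq_iff.mpr ⟨h0, h1, h2⟩)

lemma m3_add (a b c a' b' c' : ℕ) :
    m3 a b c + m3 a' b' c' = m3 (a + a') (b + b') (c + c') := by
  ext i; fin_cases i <;> simp

lemma deg3 (d : Fin 3 →₀ ℕ) : d.degree = d 0 + d 1 + d 2 := by
  rw [Finsupp.degree_apply, Finset.sum_subset (Finset.subset_univ _)
    (by intro i _ h; simpa using Finsupp.notMem_support_iff.mp h)]
  simp [Fin.sum_univ_three]

lemma XXX (a b c : ℕ) :
    (X 0 ^ a * X 1 ^ b * X 2 ^ c : MvPolynomial (Fin 3) ℝ) = monomial (m3 a b c) 1 := by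
  simp [X_pow_eq_monomial, monomial_mul, m3]

lemma s_form :
    (X 0 ^ 4 * X 1 ^ 2 + X 1 ^ 4 * X 2 ^ 2 + X 2 ^ 4 * X 0 ^ 2
        - 3 * X 0 ^ 2 * X 1 ^ 2 * X 2 ^ 2 : MvPolynomial (Fin 3) ℝ)
      = monomial (m3 4 2 0) 1 + monomial (m3 0 4 2) 1 + monomial (m3 2 0 4) 1
        - monomial (m3 2 2 2) 3 := by
  have h1 : (X 0 ^ 4 * X 1 ^ 2 : MvPolynomial (Fin 3) ℝ) = monomial (m3 4 2 0) 1 := by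
    rw [← XXX]; ring
  have h2 : (X 1 ^ 4 * X 2 ^ 2 : MvPolynomial (Fin 3) ℝ) = monomial (m3 0 4 2) 1 := by
    rw [← XXX]; ring
  have h3 : (X 2 ^ 4 * X 0 ^ 2 : MvPolynomial (Fin 3) ℝ) = monomial (m3 2 0 4) 1 := by
    rw [← XXX]; ring
  have h4 : (3 * (X 0 ^ 2 * X 1 ^ 2 * X 2 ^ 2) : MvPolynomial (Fin 3) ℝ)
      = monomial (m3 2 2 2) 3 := by
    rw [XXX, show (3 : MvPolynomial (Fin 3) ℝ) = C 3 from (map_ofNat C 3).symm,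
      C_mul_monomial, mul_one]
  rw [h1, h2, h3, ← h4]; ring

lemma coeff_sq_eq (p : MvPolynomial (Fin 3) ℝ) (hp : p.IsHomogeneous 3)
    (n u : Fin 3 →₀ ℕ) (huu : u + u = n)
    (hz : ∀ a b : Fin 3 →₀ ℕ, a + b = n → a.degree = 3 → (a, b) ≠ (u, u) →
      coeff a p * coeff b p = 0) :
    coeff n (p ^ 2) = coeff u p ^ 2 := by
  rw [sq, coeff_mul, Finset.sum_eq_single (u, u)]
  · exact (sq _).symm
  · intro ab hab hne
    have h : ab.1 + ab.2 = n := Finset.HasAntidiagonal.mem_antidiagonal.mp hab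
    by_cases hd : ab.1.degree = 3
    · exact hz ab.1 ab.2 h hd (by simpa using hne)
    · rw [hp.coeff_eq_zero hd, zero_mul]
  · intro h; exact absurd (Finset.HasAntidiagonal.mem_antidiagonal.mpr huu) h

lemma enum222 (x y z x' y' z' : ℕ) (e0 : x + x' = 2) (e1 : y + y' = 2) (e2 : z + z' = 2)
    (hd : x + y + z = 3) (hne : ¬(x = 1 ∧ y = 1 ∧ z = 1)) :
    (x = 2 ∧ y = 0 ∧ z = 1) ∨ (x = 1 ∧ y = 2 ∧ z = 0) ∨ (x = 0 ∧ y = 1 ∧ z = 2)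
    ∨ (x' = 2 ∧ y' = 0 ∧ z' = 1) ∨ (x' = 1 ∧ y' = 2 ∧ z' = 0) ∨ (x' = 0 ∧ y' = 1 ∧ z' = 2) := by
  omega

theorem choi_lam_sextic_not_sos :
    ¬ ∃ (r : ℕ) (p : Fin r → MvPolynomial (Fin 3) ℝ),
      (∀ i, (p i).IsHomogeneous 3) ∧
      (X 0 ^ 4 * X 1 ^ 2 + X 1 ^ 4 * X 2 ^ 2 + X 2 ^ 4 * X 0 ^ 2
        - 3 * X 0 ^ 2 * X 1 ^ 2 * X 2 ^ 2 : MvPolynomial (Fin 3) ℝ) = ∑ i, (p i) ^ 2 := by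
  rintro ⟨r, p, hp, hs⟩
  rw [s_form] at hs
  have key : ∀ n : Fin 3 →₀ ℕ,
      ((if m3 4 2 0 = n then (1:ℝ) else 0) + (if m3 0 4 2 = n then 1 else 0)
        + (if m3 2 0 4 = n then 1 else 0) - (if m3 2 2 2 = n then 3 else 0))
      = ∑ i, coeff n (p i ^ 2) := by
    intro n
    have := congrArg (coeff n) hs
    simpa [coeff_sub, coeff_add, coeff_monomial, coeff_sum] using this
  have sumsq_zero : ∀ (f : Fin r → ℝ), ∑ i, f i ^ 2 = 0 → ∀ i, f i = 0 := by
    intro f h i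
    have := (Finset.sum_eq_zero_iff_of_nonneg (fun j _ => sq_nonneg (f j))).mp h i
      (Finset.mem_univ i)
    exact (pow_eq_zero_iff two_ne_zero).mp this
  -- Step 1 : coefficients of x^3, y^3, z^3 vanish
  have h300 : ∀ i, coeff (m3 3 0 0) (p i) = 0 := by
    apply sumsq_zero
    have k := key (m3 6 0 0)
    have e : ∀ i, coeff (m3 6 0 0) (p i ^ 2) = coeff (m3 3 0 0) (p i) ^ 2 := by
      intro i
      refine coeff_sq_eq _ (hp i) _ _ (by rw [m3_add]) ?_
      intro a b hab hdeg hne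
      have e0 : a 0 + b 0 = 6 := by simpa using congrArg (fun f => f 0) hab
      have e1 : a 1 + b 1 = 0 := by simpa using congrArg (fun f => f 1) hab
      have e2 : a 2 + b 2 = 0 := by simpa using congrArg (fun f => f 2) hab
      rw [deg3] at hdeg
      exact absurd (by
        rw [to_m3 (show a 0 = 3 by omega) (show a 1 = 0 by omega) (show a 2 = 0 by omega),
          to_m3 (show b 0 = 3 by omega) (show b 1 = 0 by omega) (show b 2 = 0 by omega)]) hne
    rw [Finset.sum_congr rfl (fun i _ => e i)] at k
    rw [← k]
    simp [m3_eq_iff]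

  have h030 : ∀ i, coeff (m3 0 3 0) (p i) = 0 := by
    apply sumsq_zero
    have k := key (m3 0 6 0)
    have e : ∀ i, coeff (m3 0 6 0) (p i ^ 2) = coeff (m3 0 3 0) (p i) ^ 2 := by
      intro i
      refine coeff_sq_eq _ (hp i) _ _ (by rw [m3_add]) ?_
      intro a b hab hdeg hne
      have e0 : a 0 + b 0 = 0 := by simpa using congrArg (fun f => f 0) hab
      have e1 : a 1 + b 1 = 6 := by simpa using congrArg (fun f => f 1) hab
      have e2 : a 2 + b 2 = 0 := by simpa using congrArg (fun f => f 2) hab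
      rw [deg3] at hdeg
      exact absurd (by
        rw [to_m3 (show a 0 = 0 by omega) (show a 1 = 3 by omega) (show a 2 = 0 by omega),
          to_m3 (show b 0 = 0 by omega) (show b 1 = 3 by omega) (show b 2 = 0 by omega)]) hne
    rw [Finset.sum_congr rfl (fun i _ => e i)] at k
    rw [← k]
    simp [m3_eq_iff]
  have h003 : ∀ i, coeff (m3 0 0 3) (p i) = 0 := by
    apply sumsq_zero
    have k := key (m3 0 0 6)
    have e : ∀ i, coeff (m3 0 0 6) (p i ^ 2) = coeff (m3 0 0 3) (p i) ^ 2 := by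
      intro i
      refine coeff_sq_eq _ (hp i) _ _ (by rw [m3_add]) ?_
      intro a b hab hdeg hne
      have e0 : a 0 + b 0 = 0 := by simpa using congrArg (fun f => f 0) hab
      have e1 : a 1 + b 1 = 0 := by simpa using congrArg (fun f => f 1) hab
      have e2 : a 2 + b 2 = 6 := by simpa using congrArg (fun f => f 2) hab
      rw [deg3] at hdeg
      exact absurd (by
        rw [to_m3 (show a 0 = 0 by omega) (show a 1 = 0 by omega) (show a 2 = 3 by omega),
          to_m3 (show b 0 = 0 by omega) (show b 1 = 0 by omega) (show b 2 = 3 by omega)]) hne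
    rw [Finset.sum_congr rfl (fun i _ => e i)] at k
    rw [← k]
    simp [m3_eq_iff]
  -- Step 2 : coefficients of x^2 z, x y^2, y z^2 vanish
  have h201 : ∀ i, coeff (m3 2 0 1) (p i) = 0 := by
    apply sumsq_zero
    have k := key (m3 4 0 2)
    have e : ∀ i, coeff (m3 4 0 2) (p i ^ 2) = coeff (m3 2 0 1) (p i) ^ 2 := by
      intro i
      refine coeff_sq_eq _ (hp i) _ _ (by rw [m3_add]) ?_
      intro a b hab hdeg hne
      have e0 : a 0 + b 0 = 4 := by simpa using congrArg (fun f => f 0) hab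
      have e1 : a 1 + b 1 = 0 := by simpa using congrArg (fun f => f 1) hab
      have e2 : a 2 + b 2 = 2 := by simpa using congrArg (fun f => f 2) hab
      rw [deg3] at hdeg
      rcases (show (a 0 = 3 ∧ a 1 = 0 ∧ a 2 = 0) ∨ (a 0 = 2 ∧ a 1 = 0 ∧ a 2 = 1)
          ∨ (a 0 = 1 ∧ a 1 = 0 ∧ a 2 = 2) from by omega) with
        ⟨u1, u2, u3⟩ | ⟨u1, u2, u3⟩ | ⟨u1, u2, u3⟩
      · rw [to_m3 u1 u2 u3, h300 i, zero_mul]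
      · exact absurd (by
          rw [to_m3 u1 u2 u3,
            to_m3 (show b 0 = 2 by omega) (show b 1 = 0 by omega) (show b 2 = 1 by omega)]) hne
      · rw [to_m3 (show b 0 = 3 by omega) (show b 1 = 0 by omega) (show b 2 = 0 by omega),
          h300 i, mul_zero]
    rw [Finset.sum_congr rfl (fun i _ => e i)] at k
    rw [← k]
    simp [m3_eq_iff]
  have h120 : ∀ i, coeff (m3 1 2 0) (p i) = 0 := by
    apply sumsq_zero
    have k := key (m3 2 4 0)
    have e : ∀ i, coeff (m3 2 4 0) (p i ^ 2) = coeff (m3 1 2 0) (p i) ^ 2 := by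
      intro i
      refine coeff_sq_eq _ (hp i) _ _ (by rw [m3_add]) ?_
      intro a b hab hdeg hne
      have e0 : a 0 + b 0 = 2 := by simpa using congrArg (fun f => f 0) hab
      have e1 : a 1 + b 1 = 4 := by simpa using congrArg (fun f => f 1) hab
      have e2 : a 2 + b 2 = 0 := by simpa using congrArg (fun f => f 2) hab
      rw [deg3] at hdeg
      rcases (show (a 0 = 0 ∧ a 1 = 3 ∧ a 2 = 0) ∨ (a 0 = 1 ∧ a 1 = 2 ∧ a 2 = 0)
          ∨ (a 0 = 2 ∧ a 1 = 1 ∧ a 2 = 0) from by omega) with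
        ⟨u1, u2, u3⟩ | ⟨u1, u2, u3⟩ | ⟨u1, u2, u3⟩
      · rw [to_m3 u1 u2 u3, h030 i, zero_mul]
      · exact absurd (by
          rw [to_m3 u1 u2 u3,
            to_m3 (show b 0 = 1 by omega) (show b 1 = 2 by omega) (show b 2 = 0 by omega)]) hne
      · rw [to_m3 (show b 0 = 0 by omega) (show b 1 = 3 by omega) (show b 2 = 0 by omega),
          h030 i, mul_zero]
    rw [Finset.sum_congr rfl (fun i _ => e i)] at k
    rw [← k]
    simp [m3_eq_iff]
  have h012 : ∀ i, coeff (m3 0 1 2) (p i) = 0 := by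
    apply sumsq_zero
    have k := key (m3 0 2 4)
    have e : ∀ i, coeff (m3 0 2 4) (p i ^ 2) = coeff (m3 0 1 2) (p i) ^ 2 := by
      intro i
      refine coeff_sq_eq _ (hp i) _ _ (by rw [m3_add]) ?_
      intro a b hab hdeg hne
      have e0 : a 0 + b 0 = 0 := by simpa using congrArg (fun f => f 0) hab
      have e1 : a 1 + b 1 = 2 := by simpa using congrArg (fun f => f 1) hab
      have e2 : a 2 + b 2 = 4 := by simpa using congrArg (fun f => f 2) hab
      rw [deg3] at hdeg
      rcases (show (a 0 = 0 ∧ a 1 = 0 ∧ a 2 = 3) ∨ (a 0 = 0 ∧ a 1 = 1 ∧ a 2 = 2)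
          ∨ (a 0 = 0 ∧ a 1 = 2 ∧ a 2 = 1) from by omega) with
        ⟨u1, u2, u3⟩ | ⟨u1, u2, u3⟩ | ⟨u1, u2, u3⟩
      · rw [to_m3 u1 u2 u3, h003 i, zero_mul]
      · exact absurd (by
          rw [to_m3 u1 u2 u3,
            to_m3 (show b 0 = 0 by omega) (show b 1 = 1 by omega) (show b 2 = 2 by omega)]) hne
      · rw [to_m3 (show b 0 = 0 by omega) (show b 1 = 0 by omega) (show b 2 = 3 by omega),
          h003 i, mul_zero]
    rw [Finset.sum_congr rfl (fun i _ => e i)] at k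
    rw [← k]
    simp [m3_eq_iff]
  -- Step 3 : the coefficient of x^2 y^2 z^2 is a sum of squares, contradiction
  have k := key (m3 2 2 2)
  have e : ∀ i, coeff (m3 2 2 2) (p i ^ 2) = coeff (m3 1 1 1) (p i) ^ 2 := by
    intro i
    refine coeff_sq_eq _ (hp i) _ _ (by rw [m3_add]) ?_
    intro a b hab hdeg hne
    obtain ⟨x, y, z, rfl⟩ : ∃ x y z, a = m3 x y z := ⟨_, _, _, eq_m3 a⟩
    obtain ⟨x', y', z', rfl⟩ : ∃ x y z, b = m3 x y z := ⟨_, _, _, eq_m3 b⟩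
    have e0 : x + x' = 2 := by simpa using congrArg (fun f => f 0) hab
    have e1 : y + y' = 2 := by simpa using congrArg (fun f => f 1) hab
    have e2 : z + z' = 2 := by simpa using congrArg (fun f => f 2) hab
    rw [deg3] at hdeg
    simp only [m3_apply0, m3_apply1, m3_apply2] at hdeg
    have hne' : ¬(x = 1 ∧ y = 1 ∧ z = 1) := by
      rintro ⟨rfl, rfl, rfl⟩
      exact hne (by rw [show x' = 1 by omega, show y' = 1 by omega, show z' = 1 by omega])
    rcases enum222 x y z x' y' z' e0 e1 e2 hdeg hne' with
      ⟨rfl, rfl, rfl⟩ | ⟨rfl, rfl, rfl⟩ | ⟨rfl, rfl, rfl⟩ |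
      ⟨rfl, rfl, rfl⟩ | ⟨rfl, rfl, rfl⟩ | ⟨rfl, rfl, rfl⟩
    · rw [h201 i, zero_mul]
    · rw [h120 i, zero_mul]
    · rw [h012 i, zero_mul]
    · rw [h201 i, mul_zero]
    · rw [h120 i, mul_zero]
    · rw [h012 i, mul_zero]
  rw [Finset.sum_congr rfl (fun i _ => e i)] at k
  simp only [m3_eq_iff] at k
  norm_num at k
  have hnn : (0:ℝ) ≤ ∑ i, coeff (m3 1 1 1) (p i) ^ 2 :=
    Finset.sum_nonneg fun i _ => sq_nonneg _
  linarith
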